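/- Let G = (V,E) be a finite graph with edge weights ω_e ∈ [-π,π] and vertex weights υ_v ∈ [-π,π], and let H = -Σ_{{u,v}∈E} ω_{uv} X_u X_v - Σ_v υ_v X_v be the corresponding Hamiltonian on (ℂ²)^{⊗V}, where X is the Pauli-X matrix. Then ⟨0^{|V|}| exp(-iH) |0^{|V|}⟩ = 2^{-|V|} · Z_Ising(G; iω, iυ), where Z_Ising(G; iω, iυ) = Σ_{σ∈{-1,+1}^V} exp(i Σ_{{u,v}∈E} ω_{uv} σ_u σ_v + i Σ_v υ_v σ_v). -/

import Mathlib

set_option linter.unusedSectionVars false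

open scoped BigOperators

variable (V : Type) [Fintype V] [DecidableEq V]

/-- Flip the bit at position `v`. -/
def bitFlip (v : V) (y : V → Fin 2) : V → Fin 2 := Function.update y v (1 - y v)

/-- The Pauli-X matrix acting on qubit `v` of `(ℂ²)^{⊗V}`, in the computational
basis indexed by `V → Fin 2`. -/
def pauliX (v : V) : Matrix (V → Fin 2) (V → Fin 2) ℂ :=
  Matrix.of fun x y => if x = bitFlip V v y then 1 else 0

lemma bitFlip_comm (u v : V) (y : V → Fin 2) :
    bitFlip V u (bitFlip V v y) = bitFlip V v (bitFlip V u y) := by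
  by_cases h : u = v
  · subst h; rfl
  · funext w
    by_cases h1 : w = u <;> by_cases h2 : w = v <;>
      simp [bitFlip, Function.update_apply, h1, h2, h, Ne.symm h]
  
lemma pauliX_mul_apply (u v : V) (x y : V → Fin 2) :
    (pauliX V u * pauliX V v) x y = if x = bitFlip V u (bitFlip V v y) then 1 else 0 := by
  rw [Matrix.mul_apply]
  rw [Finset.sum_eq_single (bitFlip V v y)]
  · simp [pauliX]
  · intro z _ hz; simp [pauliX, hz]
  · intro h; exact absurd (Finset.mem_univ _) h

lemma pauliX_mul_comm (u v : V) : pauliX V u * pauliX V v = pauliX V v * pauliX V u := by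
  ext x y
  rw [pauliX_mul_apply, pauliX_mul_apply, bitFlip_comm]

/-- The two-qubit operator `X_u X_v` associated to an unordered pair `{u, v}`. -/
noncomputable def pauliXX (e : Sym2 V) : Matrix (V → Fin 2) (V → Fin 2) ℂ :=
  Sym2.lift ⟨fun u v => pauliX V u * pauliX V v, fun u v => pauliX_mul_comm V u v⟩ e

/-- The IQP Hamiltonian `H = -∑_{{u,v}∈E} ω_{uv} X_u X_v - ∑_v υ_v X_v`. -/
noncomputable def iqpHamiltonian (E : Finset (Sym2 V)) (ω : Sym2 V → ℝ) (υ : V → ℝ) :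
    Matrix (V → Fin 2) (V → Fin 2) ℂ :=
  -(∑ e ∈ E, (ω e : ℂ) • pauliXX V e) - ∑ v : V, (υ v : ℂ) • pauliX V v

/-- Spin `±1` of a basis state of one qubit (`0 ↦ +1`, `1 ↦ -1`). -/
noncomputable def spinσ (i : Fin 2) : ℂ := if i = 0 then 1 else -1

/-- Product of the spins of the two endpoints of an unordered pair. -/
noncomputable def spinPairσ (s : Sym2 (Fin 2)) : ℂ := if s.IsDiag then 1 else -1

/-- One qubit character `χ(a,b) = (-1)^{ab}`. -/
noncomputable def chi (a b : Fin 2) : ℂ := if a = 1 ∧ b = 1 then -1 else 1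

/-- The (unnormalized) Hadamard transform matrix. -/
noncomputable def Umat : Matrix (V → Fin 2) (V → Fin 2) ℂ :=
  Matrix.of fun x σ => ∏ v : V, chi (x v) (σ v)

lemma bitFlip_invol (v : V) (y : V → Fin 2) : bitFlip V v (bitFlip V v y) = y := by
  have h2 : ∀ a : Fin 2, 1 - (1 - a) = a := by decide
  funext w
  by_cases h : w = v
  · subst h; simp [bitFlip, h2]
  · simp [bitFlip, Function.update_apply, h]

lemma chi_zero_left (b : Fin 2) : chi 0 b = 1 := by simp [chi]

lemma chi_zero_right (a : Fin 2) : chi a 0 = 1 := by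
  fin_cases a <;> simp [chi]

lemma chi_flip (a b : Fin 2) : chi (1 - a) b = spinσ b * chi a b := by
  fin_cases a <;> fin_cases b <;> norm_num [chi, spinσ]

lemma Umat_bitFlip (v : V) (x σ : V → Fin 2) :
    Umat V (bitFlip V v x) σ = spinσ (σ v) * Umat V x σ := by
  unfold Umat
  simp only [Matrix.of_apply]
  rw [Finset.prod_eq_mul_prod_sdiff_singleton_of_mem (Finset.mem_univ v)
      (fun w => chi (bitFlip V v x w) (σ w)),
    Finset.prod_eq_mul_prod_sdiff_singleton_of_mem (Finset.mem_univ v)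
      (fun w => chi (x w) (σ w))]
  have h1 : bitFlip V v x v = 1 - x v := by simp [bitFlip]
  have h2 : ∀ w ∈ Finset.univ \ {v},
      chi (bitFlip V v x w) (σ w) = chi (x w) (σ w) := by
    intro w hw
    have hwv : w ≠ v := by simpa using (Finset.mem_sdiff.mp hw).2
    simp [bitFlip, Function.update_of_ne hwv]
  rw [Finset.prod_congr rfl h2, h1, chi_flip]
  ring

lemma pauliX_mul_Umat (v : V) :
    pauliX V v * Umat V = Umat V * Matrix.diagonal (fun σ => spinσ (σ v)) := by
  ext x σ
  rw [Matrix.mul_apply, Matrix.mul_diagonal]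
  rw [Finset.sum_eq_single (bitFlip V v x)]
  · rw [show pauliX V v x (bitFlip V v x) = 1 from by
        simp [pauliX, bitFlip_invol], one_mul, Umat_bitFlip]
    ring
  · intro y _ hy
    have hxy : x ≠ bitFlip V v y := by
      intro h; apply hy; rw [h, bitFlip_invol]
    simp [pauliX, hxy]
  · intro h; exact absurd (Finset.mem_univ _) h

lemma spin_mul (a b : Fin 2) : spinσ a * spinσ b = spinPairσ s(a, b) := by
  fin_cases a <;> fin_cases b <;>
    norm_num [spinσ, spinPairσ, Sym2.mk_isDiag_iff]

lemma pauliXX_mul_Umat (e : Sym2 V) :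
    pauliXX V e * Umat V
      = Umat V * Matrix.diagonal (fun σ => spinPairσ (e.map σ)) := by
  induction e using Sym2.ind with
  | _ u v =>
    have he : pauliXX V s(u, v) = pauliX V u * pauliX V v := rfl
    rw [he, mul_assoc, pauliX_mul_Umat, ← mul_assoc, pauliX_mul_Umat, mul_assoc,
      Matrix.diagonal_mul_diagonal]
    have hfun : (fun σ : V → Fin 2 => spinσ (σ u) * spinσ (σ v))
        = fun σ => spinPairσ (Sym2.map σ s(u, v)) := by
      funext σ; rw [spin_mul, Sym2.map_pair_eq]
    rw [hfun]

lemma diagonal_sum' {ι : Type*} (s : Finset ι) (f : ι → (V → Fin 2) → ℂ) :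
    Matrix.diagonal (fun σ => ∑ i ∈ s, f i σ)
      = ∑ i ∈ s, Matrix.diagonal (f i) := by
  ext x y
  by_cases h : x = y <;>
    simp [Matrix.diagonal_apply, h, Matrix.sum_apply]

lemma H_mul_Umat (E : Finset (Sym2 V)) (ω : Sym2 V → ℝ) (υ : V → ℝ) :
    ((-Complex.I) • iqpHamiltonian V E ω υ) * Umat V
      = Umat V * Matrix.diagonal (fun σ =>
          Complex.I * (∑ e ∈ E, (ω e : ℂ) * spinPairσ (e.map σ))
          + Complex.I * ∑ v : V, (υ v : ℂ) * spinσ (σ v)) := by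
  have hE' : (∑ e ∈ E, (ω e : ℂ) • pauliXX V e) * Umat V
      = Umat V * Matrix.diagonal
          (fun σ => ∑ e ∈ E, (ω e : ℂ) * spinPairσ (e.map σ)) := by
    rw [Finset.sum_mul, diagonal_sum', Finset.mul_sum]
    refine Finset.sum_congr rfl fun e _ => ?_
    rw [smul_mul_assoc, pauliXX_mul_Umat, ← Matrix.mul_smul,
      ← Matrix.diagonal_smul]
    rfl
  have hv' : (∑ v : V, (υ v : ℂ) • pauliX V v) * Umat V
      = Umat V * Matrix.diagonal
          (fun σ => ∑ v : V, (υ v : ℂ) * spinσ (σ v)) := by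
    rw [Finset.sum_mul, diagonal_sum', Finset.mul_sum]
    refine Finset.sum_congr rfl fun v _ => ?_
    rw [smul_mul_assoc, pauliX_mul_Umat, ← Matrix.mul_smul,
      ← Matrix.diagonal_smul]
    rfl
  unfold iqpHamiltonian
  rw [smul_mul_assoc, sub_mul, neg_mul, hE', hv', ← mul_neg, ← mul_sub,
    ← Matrix.mul_smul]
  congr 1
  ext i j
  rcases eq_or_ne i j with h | h
  · subst h
    simp only [Matrix.smul_apply, Matrix.sub_apply, Matrix.neg_apply,
      Matrix.diagonal_apply_eq, smul_eq_mul]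
    ring
  · simp [Matrix.diagonal_apply_ne _ h]

lemma chi_orth (a b : Fin 2) :
    (∑ s : Fin 2, chi a s * chi s b) = if a = b then 2 else 0 := by
  fin_cases a <;> fin_cases b <;>
    norm_num [chi, Fin.sum_univ_two]

lemma Umat_mul_Umat :
    Umat V * Umat V = ((2 : ℂ) ^ Fintype.card V) • (1 : Matrix (V → Fin 2) (V → Fin 2) ℂ) := by
  ext x y
  rw [Matrix.mul_apply]
  have key : ∑ σ : V → Fin 2, Umat V x σ * Umat V σ y
      = ∏ v : V, (∑ s : Fin 2, chi (x v) s * chi s (y v)) := by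
    rw [Finset.prod_univ_sum]
    rw [Fintype.piFinset_univ]
    refine Finset.sum_congr rfl fun σ _ => ?_
    unfold Umat
    simp only [Matrix.of_apply]
    rw [← Finset.prod_mul_distrib]
  rw [key, Matrix.smul_apply, Matrix.one_apply]
  by_cases hxy : x = y
  · subst hxy
    have h2 : ∀ v ∈ (Finset.univ : Finset V),
        (∑ s : Fin 2, chi (x v) s * chi s (x v)) = 2 := by
      intro v _; rw [chi_orth]; simp
    rw [Finset.prod_congr rfl h2, Finset.prod_const, Finset.card_univ]
    simp
  · obtain ⟨v, hv⟩ := Function.ne_iff.mp hxy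
    have h0 : (∑ s : Fin 2, chi (x v) s * chi s (y v)) = 0 := by
      rw [chi_orth]; simp [hv]
    rw [Finset.prod_eq_zero (Finset.mem_univ v) h0]
    simp [hxy]

/-- `⟨0^{|V|}| exp(-iH) |0^{|V|}⟩ = 2^{-|V|} Z_Ising(G; iω, iυ)` for the
IQP Hamiltonian `H` of a graph with edge weights `ω` and vertex weights `υ`. -/
theorem iqp_amplitude_eq_ising (E : Finset (Sym2 V)) (hE : ∀ e ∈ E, ¬ e.IsDiag)
    (ω : Sym2 V → ℝ) (hω : ∀ e ∈ E, ω e ∈ Set.Icc (-Real.pi) Real.pi)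
    (υ : V → ℝ) (hυ : ∀ v : V, υ v ∈ Set.Icc (-Real.pi) Real.pi) :
    (NormedSpace.exp ((-Complex.I) • iqpHamiltonian V E ω υ))
        (fun _ => 0) (fun _ => 0) =
      ((2 : ℂ) ^ Fintype.card V)⁻¹ *
        ∑ σ : V → Fin 2, Complex.exp (Complex.I * (∑ e ∈ E, (ω e : ℂ) * spinPairσ (e.map σ))
          + Complex.I * ∑ v : V, (υ v : ℂ) * spinσ (σ v)) := by
  classical
  set c : ℂ := ((2 : ℂ) ^ Fintype.card V)⁻¹ with hc
  have hc0 : ((2 : ℂ) ^ Fintype.card V) ≠ 0 := pow_ne_zero _ two_ne_zero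
  have hU1 : Umat V * (c • Umat V) = 1 := by
    rw [Matrix.mul_smul, Umat_mul_Umat, smul_smul, hc, inv_mul_cancel₀ hc0, one_smul]
  have hinv : (Umat V)⁻¹ = c • Umat V := Matrix.inv_eq_right_inv hU1
  have hUnit : IsUnit (Umat V) := by
    have := invertibleOfRightInverse _ _ hU1
    exact isUnit_of_invertible _
  set d : (V → Fin 2) → ℂ := fun σ =>
    Complex.I * (∑ e ∈ E, (ω e : ℂ) * spinPairσ (e.map σ))
      + Complex.I * ∑ v : V, (υ v : ℂ) * spinσ (σ v) with hd
  have hdetU : IsUnit (Umat V).det := (Matrix.isUnit_iff_isUnit_det _).mp hUnit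
  have hconj : (-Complex.I) • iqpHamiltonian V E ω υ
      = Umat V * Matrix.diagonal d * (Umat V)⁻¹ := by
    rw [← H_mul_Umat, mul_assoc, Matrix.mul_nonsing_inv _ hdetU, mul_one]
  rw [hconj, Matrix.exp_conj _ _ hUnit, Matrix.exp_diagonal, hinv]
  have hUx0 : ∀ σ : V → Fin 2, Umat V (fun _ => 0) σ = 1 := by
    intro σ; unfold Umat; simp [chi_zero_left]
  have hUx0' : ∀ σ : V → Fin 2, Umat V σ (fun _ => 0) = 1 := by
    intro σ; unfold Umat; simp [chi_zero_right]
  rw [Matrix.mul_smul, Matrix.smul_apply, smul_eq_mul]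
  congr 1
  rw [Matrix.mul_apply]
  refine Finset.sum_congr rfl fun σ _ => ?_
  rw [Matrix.mul_diagonal, hUx0, hUx0', one_mul, mul_one, Pi.coe_exp,
    ← Complex.exp_eq_exp_ℂ]
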